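/- Let a₁, a₂ ∈ ℝ and let F : ℝ × ℝ → ℝ × ℝ be the vector field F (x₁, x₂) = ( −2 a₂ x₂ (x₁² − x₂ − 2 x₁ x₂² + x₂⁴) + a₁ (x₁ + 4 x₁² x₂ − x₂² − 8 x₁ x₂³ + 4 x₂⁵), 2 a₁ (x₁ − x₂²)² − a₂ (x₁² − x₂ − 2 x₁ x₂² + x₂⁴) ). Let I ⊆ ℝ be an open interval and let x = (x₁, x₂) : I → ℝ × ℝ be differentiable with x'(t) = F (x t) for all t ∈ I. Define y₁ t = x₁ t − (x₂ t)² and y₂ t = −(x₁ t)² + x₂ t + 2 (x₁ t) (x₂ t)² − (x₂ t)⁴. Then y₁'(t) = a₁ * y₁ t and y₂'(t) = a₂ * y₂ t for all t ∈ I. That is, the change of variables y = h(x) built from the matched Koopman eigenfunctions transforms the nonlinear system ẋ = F(x) into the diagonal linear system ẏ = diag(a₁, a₂) y. (Example 3 of the paper.) -/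

import Mathlib

/-- Example 3 of the paper: the change of variables built from the matched Koopman
eigenfunctions transforms solutions of the nonlinear system ẋ = F(x) into solutions of the
diagonal linear system ẏ = diag(a₁,a₂) y. -/
theorem quadratic_example_diagonalizes
    (a₁ a₂ : ℝ) (I : Set ℝ) (hIopen : IsOpen I) (hIconn : I.OrdConnected)
    (x₁ x₂ : ℝ → ℝ)
    (hx₁ : ∀ t ∈ I, HasDerivAt x₁
      (-2*a₂*(x₂ t)*((x₁ t)^2 - x₂ t - 2*(x₁ t)*(x₂ t)^2 + (x₂ t)^4)
        + a₁*(x₁ t + 4*(x₁ t)^2*(x₂ t) - (x₂ t)^2 - 8*(x₁ t)*(x₂ t)^3 + 4*(x₂ t)^5)) t)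
    (hx₂ : ∀ t ∈ I, HasDerivAt x₂
      (2*a₁*(x₁ t - (x₂ t)^2)^2
        - a₂*((x₁ t)^2 - x₂ t - 2*(x₁ t)*(x₂ t)^2 + (x₂ t)^4)) t) :
    ∀ t ∈ I,
      HasDerivAt (fun s => x₁ s - (x₂ s)^2) (a₁ * (x₁ t - (x₂ t)^2)) t ∧
      HasDerivAt (fun s => -(x₁ s)^2 + x₂ s + 2*(x₁ s)*(x₂ s)^2 - (x₂ s)^4)
        (a₂ * (-(x₁ t)^2 + x₂ t + 2*(x₁ t)*(x₂ t)^2 - (x₂ t)^4)) t := by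
  intro t ht
  have h1 := hx₁ t ht
  have h2 := hx₂ t ht
  constructor
  · have := h1.sub (h2.fun_pow 2)
    convert this using 1
    · rfl
    · rfl
    · rfl
    push_cast
    ring
  · have := (((h1.fun_pow 2).neg.add h2).add ((h1.mul (h2.fun_pow 2)).const_mul 2)).sub (h2.fun_pow 4)
    convert this using 1
    · rfl
    · rfl
    · ext s; simp only [Pi.add_apply, Pi.sub_apply, Pi.neg_apply, Pi.mul_apply]; ring
    · push_cast; ring
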